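/- Let 𝒜 be a skeletally small abelian category and let A₁, A₂ be objects of 𝒜 with [A₁] = [A₂] in the Grothendieck group K₀(𝒜). Then there exist objects C, D, K, L of 𝒜 and short exact sequences 0 → C → K → D → 0 and 0 → C → L → D → 0 in 𝒜 such that A₁ ⊕ K ≅ A₂ ⊕ L. -/

import Mathlib

open CategoryTheory CategoryTheory.Limits

universe v u

/-- The subgroup of relations defining the Grothendieck group `K₀` of an abelian category:
for each short exact sequence `0 → X₁ → X₂ → X₃ → 0` we impose `[X₂] = [X₁] + [X₃]`. -/
def K0Relations (𝒜 : Type u) [Category.{v} 𝒜] [Abelian 𝒜] :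
    AddSubgroup (FreeAbelianGroup 𝒜) :=
  AddSubgroup.closure
    {x | ∃ S : ShortComplex 𝒜, S.ShortExact ∧
      x = FreeAbelianGroup.of S.X₂ - FreeAbelianGroup.of S.X₁ - FreeAbelianGroup.of S.X₃}

/-- The Grothendieck group `K₀(𝒜)` of a (skeletally small) abelian category `𝒜`: the abelian
group with one generator for each object of `𝒜` and one relation `[A₂] = [A₁] + [A₃]` for each
short exact sequence `0 → A₁ → A₂ → A₃ → 0`. -/
def K0 (𝒜 : Type u) [Category.{v} 𝒜] [Abelian 𝒜] : Type u :=
  FreeAbelianGroup 𝒜 ⧸ K0Relations 𝒜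

/-- The class `[A] ∈ K₀(𝒜)` of an object `A` of `𝒜`. -/
def K0.mk {𝒜 : Type u} [Category.{v} 𝒜] [Abelian 𝒜] (A : 𝒜) : K0 𝒜 :=
  QuotientAddGroup.mk (FreeAbelianGroup.of A)

open ZeroObject in
section
namespace K0Aux

variable {𝒜 : Type u} [Category.{v} 𝒜] [Abelian 𝒜]

/-- Binary biproduct of short exact sequences is short exact. -/
lemma shortExact_biprodMap {S T : ShortComplex 𝒜} (hS : S.ShortExact) (hT : T.ShortExact) :
    (ShortComplex.mk (biprod.map S.f T.f) (biprod.map S.g T.g)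
      (by apply biprod.hom_ext <;> simp [S.zero, T.zero])).ShortExact := by
  haveI := hS.mono_f
  haveI := hT.mono_f
  haveI := hS.epi_g
  haveI := hT.epi_g
  have w : biprod.map S.f T.f ≫ biprod.map S.g T.g = 0 := by
    apply biprod.hom_ext <;> simp [S.zero, T.zero]
  have hmono : Mono (biprod.map S.f T.f) := by
    constructor
    intro Z a b hab
    apply biprod.hom_ext
    · have h1 := hab =≫ biprod.fst
      simp only [Category.assoc, biprod.map_fst] at h1
      rw [← Category.assoc, ← Category.assoc] at h1
      exact (cancel_mono S.f).1 h1
    · have h1 := hab =≫ biprod.snd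
      simp only [Category.assoc, biprod.map_snd] at h1
      rw [← Category.assoc, ← Category.assoc] at h1
      exact (cancel_mono T.f).1 h1
  have hepi : Epi (biprod.map S.g T.g) := by
    constructor
    intro Z a b hab
    apply biprod.hom_ext'
    · have h1 := biprod.inl ≫= hab
      rw [← Category.assoc, ← Category.assoc, biprod.inl_map, Category.assoc, Category.assoc] at h1
      exact (cancel_epi S.g).1 h1
    · have h1 := biprod.inr ≫= hab
      rw [← Category.assoc, ← Category.assoc, biprod.inr_map, Category.assoc, Category.assoc] at h1
      exact (cancel_epi T.g).1 h1
  have hker : IsLimit (KernelFork.ofι (biprod.map S.f T.f) w) := by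
    refine KernelFork.IsLimit.ofι _ _
      (fun {W} l hl => biprod.lift
        (hS.fIsKernel.lift (KernelFork.ofι (l ≫ biprod.fst) (by
          have h1 := hl =≫ biprod.fst
          simp only [Category.assoc, biprod.map_fst, zero_comp] at h1
          simpa using h1)))
        (hT.fIsKernel.lift (KernelFork.ofι (l ≫ biprod.snd) (by
          have h1 := hl =≫ biprod.snd
          simp only [Category.assoc, biprod.map_snd, zero_comp] at h1
          simpa using h1)))) ?_ ?_
    · intro W l hl
      apply biprod.hom_ext
      · simp only [Category.assoc, biprod.map_fst, biprod.lift_fst_assoc]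
        exact Fork.IsLimit.lift_ι hS.fIsKernel
      · simp only [Category.assoc, biprod.map_snd, biprod.lift_snd_assoc]
        exact Fork.IsLimit.lift_ι hT.fIsKernel
    · intro W l hl m hm
      rw [← cancel_mono (biprod.map S.f T.f), hm]
      apply biprod.hom_ext
      · simp only [Category.assoc, biprod.map_fst, biprod.lift_fst_assoc]
        symm; exact Fork.IsLimit.lift_ι hS.fIsKernel
      · simp only [Category.assoc, biprod.map_snd, biprod.lift_snd_assoc]
        symm; exact Fork.IsLimit.lift_ι hT.fIsKernel
  exact { exact := ShortComplex.exact_of_f_is_kernel _ hker, mono_f := hmono, epi_g := hepi }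


/-- Iterated biproduct of a list of objects. -/
noncomputable def P : List 𝒜 → 𝒜
  | [] => 0
  | a :: l => a ⊞ P l

lemma shortExact_zero :
    (ShortComplex.mk (0 : (0 : 𝒜) ⟶ 0) (0 : (0 : 𝒜) ⟶ 0) (by simp)).ShortExact where
  exact := ShortComplex.exact_of_isZero_X₂ _ (isZero_zero 𝒜)
  mono_f := ⟨fun _ _ _ => (isZero_zero 𝒜).eq_of_tgt _ _⟩
  epi_g := ⟨fun _ _ _ => (isZero_zero 𝒜).eq_of_src _ _⟩

lemma listSES : ∀ (l : List (ShortComplex 𝒜)), (∀ S ∈ l, S.ShortExact) →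
    ∃ (f : P (l.map ShortComplex.X₁) ⟶ P (l.map ShortComplex.X₂))
      (g : P (l.map ShortComplex.X₂) ⟶ P (l.map ShortComplex.X₃)) (w : f ≫ g = 0),
      (ShortComplex.mk f g w).ShortExact
  | [], _ => ⟨0, 0, by simp, shortExact_zero⟩
  | S :: l, hl => by
      obtain ⟨f, g, w, hse⟩ := listSES l (fun T hT => hl T (List.mem_cons_of_mem _ hT))
      have hS := hl S List.mem_cons_self
      exact ⟨biprod.map S.f f, biprod.map S.g g, _,
        shortExact_biprodMap hS (T := ShortComplex.mk f g w) hse⟩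

lemma perm_iso {l₁ l₂ : List 𝒜} (h : l₁.Perm l₂) : Nonempty ((P l₁) ≅ P l₂) := by
  induction h with
  | nil => exact ⟨Iso.refl _⟩
  | cons a _ ih => exact ⟨biprod.mapIso (Iso.refl a) ih.some⟩
  | swap a b l =>
      exact ⟨(biprod.associator b a (P l)).symm ≪≫
        biprod.mapIso (biprod.braiding b a) (Iso.refl (P l)) ≪≫ biprod.associator a b (P l)⟩
  | trans _ _ ih₁ ih₂ => exact ⟨ih₁.some ≪≫ ih₂.some⟩

lemma zero_biprod_iso (X : 𝒜) : Nonempty (X ≅ (0 : 𝒜) ⊞ X) := by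
  refine ⟨⟨biprod.lift 0 (𝟙 X), biprod.snd, by simp, ?_⟩⟩
  apply biprod.hom_ext
  · exact (isZero_zero 𝒜).eq_of_tgt _ _
  · simp

lemma append_iso : ∀ (l m : List 𝒜), Nonempty (P (l ++ m) ≅ P l ⊞ P m)
  | [], m => ⟨(zero_biprod_iso (P m)).some⟩
  | a :: l, m =>
      ⟨biprod.mapIso (Iso.refl a) (append_iso l m).some ≪≫
        (biprod.associator a (P l) (P m)).symm⟩

lemma flat_iso : ∀ (l : List (ShortComplex 𝒜)),
    Nonempty (P (l.flatMap fun S => [S.X₁, S.X₃]) ≅ P (l.map fun S => S.X₁ ⊞ S.X₃))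
  | [] => ⟨Iso.refl _⟩
  | S :: l => by
      have : (S :: l).flatMap (fun S => [S.X₁, S.X₃])
          = S.X₁ :: S.X₃ :: l.flatMap (fun S => [S.X₁, S.X₃]) := by simp
      rw [this]
      exact ⟨(biprod.associator S.X₁ S.X₃ _).symm ≪≫
        biprod.mapIso (Iso.refl (S.X₁ ⊞ S.X₃)) (flat_iso l).some⟩




noncomputable def relOf (S : ShortComplex 𝒜) : FreeAbelianGroup 𝒜 :=
  FreeAbelianGroup.of S.X₂ - FreeAbelianGroup.of S.X₁ - FreeAbelianGroup.of S.X₃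

lemma mem_closure {x : FreeAbelianGroup 𝒜}
    (hx : x ∈ AddSubgroup.closure
      {x | ∃ S : ShortComplex 𝒜, S.ShortExact ∧
        x = FreeAbelianGroup.of S.X₂ - FreeAbelianGroup.of S.X₁ - FreeAbelianGroup.of S.X₃}) :
    ∃ (l₁ l₂ : List (ShortComplex 𝒜)), (∀ S ∈ l₁, S.ShortExact) ∧ (∀ S ∈ l₂, S.ShortExact) ∧
      x = (l₁.map relOf).sum - (l₂.map relOf).sum := by
  induction hx using AddSubgroup.closure_induction with
  | mem y hy =>
      obtain ⟨S, hS, rfl⟩ := hy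
      exact ⟨[S], [], by simpa using hS, by simp, by simp [relOf]⟩
  | zero => exact ⟨[], [], by simp, by simp, by simp⟩
  | add y z _ _ ihy ihz =>
      obtain ⟨a₁, a₂, ha₁, ha₂, rfl⟩ := ihy
      obtain ⟨b₁, b₂, hb₁, hb₂, rfl⟩ := ihz
      refine ⟨a₁ ++ b₁, a₂ ++ b₂, ?_, ?_, ?_⟩
      · intro S hS; rcases List.mem_append.1 hS with h | h; exacts [ha₁ S h, hb₁ S h]
      · intro S hS; rcases List.mem_append.1 hS with h | h; exacts [ha₂ S h, hb₂ S h]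
      · simp only [List.map_append, List.sum_append]; abel
  | neg y _ ihy =>
      obtain ⟨a₁, a₂, ha₁, ha₂, rfl⟩ := ihy
      exact ⟨a₂, a₁, ha₂, ha₁, by abel⟩

lemma count_sum [DecidableEq 𝒜] (l : List 𝒜) (a : 𝒜) :
    FreeAbelianGroup.toFinsupp ((l.map FreeAbelianGroup.of).sum) a = l.count a := by
  induction l with
  | nil => simp
  | cons x l ih =>
      simp only [List.map_cons, List.sum_cons, map_add, Finsupp.add_apply, ih,
        FreeAbelianGroup.toFinsupp_of, List.count_cons, Finsupp.single_apply]
      push_cast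
      split_ifs with h1 h2 h2 <;> simp_all <;> omega

lemma perm_of_sum_eq {l₁ l₂ : List 𝒜}
    (h : (l₁.map FreeAbelianGroup.of).sum = (l₂.map FreeAbelianGroup.of).sum) :
    l₁.Perm l₂ := by
  classical
  rw [List.perm_iff_count]
  intro a
  have h2 := congrArg (fun z => FreeAbelianGroup.toFinsupp z a) h
  simp only [count_sum] at h2
  exact_mod_cast h2

lemma relOf_sum (l : List (ShortComplex 𝒜)) :
    (l.map relOf).sum = (l.map (fun S => FreeAbelianGroup.of S.X₂)).sum
      - (l.map (fun S => FreeAbelianGroup.of S.X₁ + FreeAbelianGroup.of S.X₃)).sum := by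
  induction l with
  | nil => simp
  | cons S l ih => simp only [List.map_cons, List.sum_cons, ih, relOf]; abel

lemma flat_sum (l : List (ShortComplex 𝒜)) :
    (((l.flatMap fun S => [S.X₁, S.X₃]).map FreeAbelianGroup.of)).sum
      = (l.map (fun S => FreeAbelianGroup.of S.X₁ + FreeAbelianGroup.of S.X₃)).sum := by
  induction l with
  | nil => simp
  | cons S l ih =>
      rw [List.flatMap_cons]
      simp only [List.map_append, List.sum_append, List.map_cons, List.sum_cons, ih,
        List.map_nil, List.sum_nil]
      abel

lemma rearrange {G : Type*} [AddCommGroup G] {p q a b c d : G}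
    (h : -p + q = a - b - (c - d)) : q + (b + c) = p + (a + d) := by
  have h2 : q + (b + c) = p + (a + d) + (-p + q - (a - b - (c - d))) := by abel
  rw [h2, h]; abel

/-- The split short complex `X₁ ⟶ X₁ ⊞ X₃ ⟶ X₃` associated to a short complex. -/
noncomputable def split (S : ShortComplex 𝒜) : ShortComplex 𝒜 :=
  ShortComplex.mk (biprod.inl : S.X₁ ⟶ S.X₁ ⊞ S.X₃) (biprod.snd : S.X₁ ⊞ S.X₃ ⟶ S.X₃) (by simp)

lemma split_shortExact (S : ShortComplex 𝒜) : (split S).ShortExact :=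
  (ShortComplex.Splitting.ofHasBinaryBiproduct S.X₁ S.X₃).shortExact

lemma listSES' (l : List (ShortComplex 𝒜)) (hl : ∀ S ∈ l, S.ShortExact)
    (m₁ m₂ m₃ : List 𝒜) (h₁ : l.map ShortComplex.X₁ = m₁) (h₂ : l.map ShortComplex.X₂ = m₂)
    (h₃ : l.map ShortComplex.X₃ = m₃) :
    ∃ (f : P m₁ ⟶ P m₂) (g : P m₂ ⟶ P m₃) (w : f ≫ g = 0),
      (ShortComplex.mk f g w).ShortExact := by
  subst h₁ h₂ h₃
  exact listSES l hl

end K0Aux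

theorem stmt5 (𝒜 : Type u) [Category.{v} 𝒜] [Abelian 𝒜] (A₁ A₂ : 𝒜)
    (h : K0.mk A₁ = K0.mk A₂) :
    ∃ (C D K L : 𝒜) (f : C ⟶ K) (g : K ⟶ D) (f' : C ⟶ L) (g' : L ⟶ D)
      (w : f ≫ g = 0) (w' : f' ≫ g' = 0),
      (ShortComplex.mk f g w).ShortExact ∧ (ShortComplex.mk f' g' w').ShortExact ∧
      Nonempty ((A₁ ⊞ K) ≅ (A₂ ⊞ L)) := by
  classical
  open K0Aux in
  have h' : -(FreeAbelianGroup.of A₁) + FreeAbelianGroup.of A₂ ∈ K0Relations 𝒜 :=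
    QuotientAddGroup.eq.mp h
  obtain ⟨l₁, l₂, hl₁, hl₂, hx⟩ := K0Aux.mem_closure h'
  rw [K0Aux.relOf_sum, K0Aux.relOf_sum] at hx
  -- the key permutation
  have hsum : ((A₂ :: ((l₁.flatMap fun S => [S.X₁, S.X₃]) ++ l₂.map ShortComplex.X₂)).map
        FreeAbelianGroup.of).sum
      = ((A₁ :: (l₁.map ShortComplex.X₂ ++ (l₂.flatMap fun S => [S.X₁, S.X₃]))).map
        FreeAbelianGroup.of).sum := by
    simp only [List.map_cons, List.sum_cons, List.map_append, List.sum_append,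
      K0Aux.flat_sum, List.map_map, Function.comp_def]
    exact K0Aux.rearrange hx
  have hperm := K0Aux.perm_of_sum_eq hsum
  -- the lists of short exact sequences
  set t : List (ShortComplex 𝒜) := l₁ ++ l₂.map K0Aux.split with ht_def
  set t' : List (ShortComplex 𝒜) := l₁.map K0Aux.split ++ l₂ with ht'_def
  have ht : ∀ S ∈ t, S.ShortExact := by
    intro S hS
    rcases List.mem_append.1 hS with h1 | h1
    · exact hl₁ S h1
    · obtain ⟨T, _, rfl⟩ := List.mem_map.1 h1
      exact K0Aux.split_shortExact T
  have ht' : ∀ S ∈ t', S.ShortExact := by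
    intro S hS
    rcases List.mem_append.1 hS with h1 | h1
    · obtain ⟨T, _, rfl⟩ := List.mem_map.1 h1
      exact K0Aux.split_shortExact T
    · exact hl₂ S h1
  obtain ⟨f, g, w, hse⟩ := K0Aux.listSES' t ht
    (l₁.map ShortComplex.X₁ ++ l₂.map ShortComplex.X₁)
    (l₁.map ShortComplex.X₂ ++ l₂.map (fun S => S.X₁ ⊞ S.X₃))
    (l₁.map ShortComplex.X₃ ++ l₂.map ShortComplex.X₃)
    (by simp only [ht_def, List.map_append, List.map_map]; rfl)
    (by simp only [ht_def, List.map_append, List.map_map]; rfl)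
    (by simp only [ht_def, List.map_append, List.map_map]; rfl)
  obtain ⟨f', g', w', hse'⟩ := K0Aux.listSES' t' ht'
    (l₁.map ShortComplex.X₁ ++ l₂.map ShortComplex.X₁)
    (l₁.map (fun S => S.X₁ ⊞ S.X₃) ++ l₂.map ShortComplex.X₂)
    (l₁.map ShortComplex.X₃ ++ l₂.map ShortComplex.X₃)
    (by simp only [ht'_def, List.map_append, List.map_map]; rfl)
    (by simp only [ht'_def, List.map_append, List.map_map]; rfl)
    (by simp only [ht'_def, List.map_append, List.map_map]; rfl)
  refine ⟨_, _, _, _, f, g, f', g', w, w', hse, hse', ?_⟩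
  -- now build the isomorphism
  have e1 := (K0Aux.append_iso (l₁.map ShortComplex.X₂) (l₂.map (fun S => S.X₁ ⊞ S.X₃))).some
  have e2 := (K0Aux.flat_iso l₂).some
  have e3 := (K0Aux.append_iso (l₁.map ShortComplex.X₂) (l₂.flatMap fun S => [S.X₁, S.X₃])).some
  have e4 := (K0Aux.append_iso (l₁.map (fun S => S.X₁ ⊞ S.X₃)) (l₂.map ShortComplex.X₂)).some
  have e5 := (K0Aux.flat_iso l₁).some
  have e6 := (K0Aux.append_iso (l₁.flatMap fun S => [S.X₁, S.X₃]) (l₂.map ShortComplex.X₂)).some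
  have e7 := (K0Aux.perm_iso hperm.symm).some
  -- K ≅ P (l₁.map X₂ ++ flat l₂)
  have isoK := e1 ≪≫ biprod.mapIso (Iso.refl _) e2.symm ≪≫ e3.symm
  -- L ≅ P (flat l₁ ++ l₂.map X₂)
  have isoL := e4 ≪≫ biprod.mapIso e5.symm (Iso.refl _) ≪≫ e6.symm
  exact ⟨biprod.mapIso (Iso.refl A₁) isoK ≪≫ e7 ≪≫ biprod.mapIso (Iso.refl A₂) isoL.symm⟩
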